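/- Let u_1,…,u_l be positive rationals and n_1,…,n_l positive integers. The system of conditions 'u_i·x is an n_i-th power of a positive rational' for i = 1,…,l has a solution x in the positive rationals if and only if for every i ≠ j, u_i·u_j⁻¹ is a gcd(n_i,n_j)-th power of a positive rational. -/

import Mathlib

lemma my_nat_pow {m k : ℕ} (hm : m ≠ 0) (h : ∀ p : ℕ, p.Prime → k ∣ m.factorization p) :
    ∃ b : ℕ, 0 < b ∧ m = b ^ k := by
  have hsupp : ∀ p ∈ m.factorization.support, p.Prime := fun p hp =>
    Nat.prime_of_mem_primeFactors (by rwa [← Nat.support_factorization])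
  refine ⟨∏ p ∈ m.factorization.support, p ^ (m.factorization p / k), ?_, ?_⟩
  · exact Finset.prod_pos fun p hp => pow_pos (hsupp p hp).pos _
  · rw [← Finset.prod_pow]
    have : ∀ p ∈ m.factorization.support,
        (p ^ (m.factorization p / k)) ^ k = p ^ m.factorization p := fun p hp => by
      rw [← pow_mul, Nat.div_mul_cancel (h p (hsupp p hp))]
    rw [Finset.prod_congr rfl this]
    exact (Nat.factorization_prod_pow_eq_self hm).symm

lemma my_pow_iff (q : ℚ) (hq : 0 < q) (k : ℕ) (hk : 0 < k) :
    (∃ y : ℚ, 0 < y ∧ q = y ^ k) ↔ ∀ p : ℕ, p.Prime → (k : ℤ) ∣ padicValRat p q := by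
  constructor
  · rintro ⟨y, hy, rfl⟩ p hp
    haveI := Fact.mk hp
    rw [padicValRat.pow _]
    exact Dvd.intro _ rfl
  · intro h
    have hnum : q.num.natAbs ≠ 0 := Int.natAbs_ne_zero.mpr (Rat.num_ne_zero.mpr hq.ne')
    have hden : q.den ≠ 0 := q.den_nz
    have hval : ∀ p : ℕ, p.Prime → padicValRat p q =
        (q.num.natAbs.factorization p : ℤ) - q.den.factorization p := by
      intro p hp
      rw [padicValRat_def, padicValInt, Nat.factorization_def _ hp, Nat.factorization_def _ hp]
    have hdvd : ∀ p : ℕ, p.Prime →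
        k ∣ q.num.natAbs.factorization p ∧ k ∣ q.den.factorization p := by
      intro p hp
      have hd := h p hp
      rw [hval p hp] at hd
      have hcop : ¬(p ∣ q.num.natAbs ∧ p ∣ q.den) := by
        rintro ⟨h1, h2⟩
        exact hp.one_lt.ne' (Nat.eq_one_of_dvd_coprimes q.reduced h1 h2)
      rcases not_and_or.mp hcop with h1 | h1
      · have e1 : q.num.natAbs.factorization p = 0 := Nat.factorization_eq_zero_of_not_dvd h1
        rw [e1] at hd
        simp only [Nat.cast_zero, zero_sub, dvd_neg, Int.natCast_dvd_natCast] at hd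
        exact ⟨e1 ▸ dvd_zero k, hd⟩
      · have e1 : q.den.factorization p = 0 := Nat.factorization_eq_zero_of_not_dvd h1
        rw [e1] at hd
        simp only [Nat.cast_zero, sub_zero, Int.natCast_dvd_natCast] at hd
        exact ⟨hd, e1 ▸ dvd_zero k⟩
    obtain ⟨b1, hb1, he1⟩ := my_nat_pow hnum fun p hp => (hdvd p hp).1
    obtain ⟨b2, hb2, he2⟩ := my_nat_pow hden fun p hp => (hdvd p hp).2
    refine ⟨(b1 : ℚ) / b2, by positivity, ?_⟩
    have hnn : ((q.num.natAbs : ℤ)) = q.num := Int.natAbs_of_nonneg (Rat.num_nonneg.mpr hq.le)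
    rw [div_pow, ← Nat.cast_pow, ← Nat.cast_pow, ← he1, ← he2]
    conv_lhs => rw [← q.num_div_den]
    congr 1
    conv_lhs => rw [← hnn, Int.cast_natCast]

lemma my_zpow (p : ℕ) [Fact p.Prime] {q : ℚ} (hq : q ≠ 0) (z : ℤ) :
    padicValRat p (q ^ z) = z * padicValRat p q := by
  obtain ⟨m, rfl | rfl⟩ := z.eq_nat_or_neg
  · rw [zpow_natCast, padicValRat.pow _]
  · rw [zpow_neg, zpow_natCast, padicValRat.inv, padicValRat.pow _]
    ring

lemma my_val_prime (p : ℕ) [hp : Fact p.Prime] (q : ℕ) (hq : q.Prime) :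
    padicValRat p (q : ℚ) = if p = q then 1 else 0 := by
  rw [padicValRat.of_nat]
  split_ifs with h
  · subst h; simp
  · rw [padicValNat.eq_zero_of_not_dvd]
    · simp
    · rw [Nat.prime_dvd_prime_iff_eq hp.out hq]
      exact h

lemma my_val_prod (S : Finset ℕ) (hS : ∀ q ∈ S, q.Prime) (e : ℕ → ℤ) (p : ℕ) [hp : Fact p.Prime] :
    padicValRat p (∏ q ∈ S, (q : ℚ) ^ (e q)) = if p ∈ S then e p else 0 := by
  induction S using Finset.cons_induction with
  | empty => simp
  | cons a s ha ih =>
    have hprime : a.Prime := hS a (Finset.mem_cons_self a s)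
    have hane : ((a : ℚ)) ≠ 0 := by exact_mod_cast hprime.ne_zero
    have hfac : (a : ℚ) ^ (e a) ≠ 0 := zpow_ne_zero _ hane
    have hrest : (∏ q ∈ s, (q : ℚ) ^ (e q)) ≠ 0 :=
      Finset.prod_ne_zero_iff.mpr fun q hq => zpow_ne_zero _
        (by exact_mod_cast (hS q (Finset.mem_cons_of_mem hq)).ne_zero)
    rw [Finset.prod_cons, padicValRat.mul hfac hrest, my_zpow p hane,
      my_val_prime p a hprime, ih fun q hq => hS q (Finset.mem_cons_of_mem hq)]
    by_cases hpa : p = a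
    · subst hpa
      simp [ha]
    · simp [hpa, Finset.mem_cons]
lemma my_dist {a b c : ℕ} (ha : a ≠ 0) (hb : b ≠ 0) (hc : c ≠ 0) :
    Nat.gcd (Nat.lcm a b) c ∣ Nat.lcm (Nat.gcd a c) (Nat.gcd b c) := by
  have hlcm : Nat.lcm a b ≠ 0 := Nat.lcm_ne_zero ha hb
  have hg1 : Nat.gcd a c ≠ 0 := Nat.gcd_ne_zero_left ha
  have hg2 : Nat.gcd b c ≠ 0 := Nat.gcd_ne_zero_left hb
  rw [← Nat.factorization_le_iff_dvd (Nat.gcd_ne_zero_right hc) (Nat.lcm_ne_zero hg1 hg2)]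
  rw [Nat.factorization_gcd hlcm hc, Nat.factorization_lcm ha hb,
    Nat.factorization_lcm hg1 hg2, Nat.factorization_gcd ha hc, Nat.factorization_gcd hb hc]
  intro p
  simp only [Finsupp.inf_apply, Finsupp.sup_apply]
  omega

lemma my_crt2 (m k : ℕ) (b a : ℤ) (h : (Nat.gcd m k : ℤ) ∣ b - a) :
    ∃ c : ℤ, (m : ℤ) ∣ b - c ∧ (k : ℤ) ∣ a - c := by
  obtain ⟨t, ht⟩ := h
  refine ⟨b - (m : ℤ) * (Int.gcdA m k * t), ⟨Int.gcdA m k * t, by ring⟩,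
    ⟨-(Int.gcdB m k * t), ?_⟩⟩
  have hg := Int.gcd_eq_gcd_ab (m : ℤ) (k : ℤ)
  rw [Int.gcd_natCast_natCast] at hg
  linear_combination -ht - t * hg
lemma my_crt : ∀ (l : ℕ) (n : Fin l → ℕ), (∀ i, 0 < n i) → ∀ (a : Fin l → ℤ),
    (∀ i j, (Nat.gcd (n i) (n j) : ℤ) ∣ a i - a j) →
    ∀ (m : ℕ), 0 < m → ∀ (b : ℤ), (∀ i, (Nat.gcd m (n i) : ℤ) ∣ b - a i) →
    ∃ e : ℤ, (m : ℤ) ∣ b - e ∧ ∀ i, (n i : ℤ) ∣ a i - e := by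
  intro l
  induction l with
  | zero => exact fun n _ a _ m _ b _ => ⟨b, ⟨0, by ring⟩, fun i => i.elim0⟩
  | succ l ih =>
    intro n hn a hcomp m hm b hb
    obtain ⟨c, hmc, h0c⟩ := my_crt2 m (n 0) b (a 0) (hb 0)
    set m' := Nat.lcm m (n 0) with hm'
    have hm'pos : 0 < m' := Nat.pos_of_ne_zero (Nat.lcm_ne_zero hm.ne' (hn 0).ne')
    have hcompat : ∀ i : Fin l, (Nat.gcd m' (n i.succ) : ℤ) ∣ c - a i.succ := by
      intro i
      have h1 : (Nat.gcd m (n i.succ) : ℤ) ∣ c - a i.succ := by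
        have : c - a i.succ = (b - a i.succ) - (b - c) := by ring
        rw [this]
        exact dvd_sub (hb i.succ)
          (dvd_trans (Int.natCast_dvd_natCast.mpr (Nat.gcd_dvd_left m (n i.succ))) hmc)
      have h2 : (Nat.gcd (n 0) (n i.succ) : ℤ) ∣ c - a i.succ := by
        have : c - a i.succ = (a 0 - a i.succ) - (a 0 - c) := by ring
        rw [this]
        exact dvd_sub (hcomp 0 i.succ)
          (dvd_trans (Int.natCast_dvd_natCast.mpr (Nat.gcd_dvd_left (n 0) (n i.succ))) h0c)
      have hlcm : (Nat.lcm (Nat.gcd m (n i.succ)) (Nat.gcd (n 0) (n i.succ)) : ℤ) ∣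
          c - a i.succ := by
        have := Int.natCast_dvd.mpr (Int.lcm_dvd (Int.dvd_natAbs.mpr h1) (Int.dvd_natAbs.mpr h2))
        simpa [Int.lcm, Int.natAbs_natCast] using this
      exact dvd_trans (Int.natCast_dvd_natCast.mpr
        (my_dist hm.ne' (hn 0).ne' (hn i.succ).ne')) hlcm
    obtain ⟨e, hce, htail⟩ := ih (fun i => n i.succ) (fun i => hn i.succ)
      (fun i => a i.succ) (fun i j => hcomp i.succ j.succ) m' hm'pos c hcompat
    have hmdvd : (m : ℤ) ∣ c - e :=
      dvd_trans (Int.natCast_dvd_natCast.mpr (Nat.dvd_lcm_left m (n 0))) hce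
    have hn0dvd : (n 0 : ℤ) ∣ c - e :=
      dvd_trans (Int.natCast_dvd_natCast.mpr (Nat.dvd_lcm_right m (n 0))) hce
    refine ⟨e, by have : b - e = (b - c) + (c - e) := by ring
                  rw [this]; exact dvd_add hmc hmdvd, ?_⟩
    intro i
    refine Fin.cases ?_ ?_ i
    · have : a 0 - e = (a 0 - c) + (c - e) := by ring
      rw [this]; exact dvd_add h0c hn0dvd
    · exact htail

theorem stmt_5 (l : ℕ) (u : Fin l → ℚ) (hu : ∀ i, 0 < u i)
    (n : Fin l → ℕ) (hn : ∀ i, 0 < n i) :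
    (∃ x : ℚ, 0 < x ∧ ∀ i, ∃ y : ℚ, 0 < y ∧ u i * x = y ^ n i) ↔
      ∀ i j, i ≠ j → ∃ y : ℚ, 0 < y ∧ u i * (u j)⁻¹ = y ^ Nat.gcd (n i) (n j) := by
  constructor
  · rintro ⟨x, hx, hsol⟩ i j hij
    obtain ⟨yi, hyi, hei⟩ := hsol i
    obtain ⟨yj, hyj, hej⟩ := hsol j
    refine ⟨yi ^ (n i / Nat.gcd (n i) (n j)) / yj ^ (n j / Nat.gcd (n i) (n j)), by positivity, ?_⟩
    rw [div_pow, ← pow_mul, ← pow_mul, Nat.div_mul_cancel (Nat.gcd_dvd_left (n i) (n j)),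
      Nat.div_mul_cancel (Nat.gcd_dvd_right (n i) (n j)), ← hei, ← hej]
    field_simp
  · intro h
    set S : Finset ℕ :=
      Finset.univ.biUnion fun i : Fin l =>
        (u i).num.natAbs.primeFactors ∪ (u i).den.primeFactors with hS
    have hSprime : ∀ p ∈ S, p.Prime := by
      intro p hp
      rw [hS, Finset.mem_biUnion] at hp
      obtain ⟨i, _, hi⟩ := hp
      rcases Finset.mem_union.mp hi with h' | h'
      · exact (Nat.mem_primeFactors.mp h').1
      · exact (Nat.mem_primeFactors.mp h').1
    have hvanish : ∀ p : ℕ, p.Prime → p ∉ S → ∀ i, padicValRat p (u i) = 0 := by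
      intro p hp hpS i
      have hnum : (u i).num.natAbs ≠ 0 :=
        Int.natAbs_ne_zero.mpr (Rat.num_ne_zero.mpr (hu i).ne')
      have h1 : ¬ p ∣ (u i).num.natAbs := fun hd =>
        hpS (Finset.mem_biUnion.mpr ⟨i, Finset.mem_univ i,
          Finset.mem_union_left _ (Nat.mem_primeFactors.mpr ⟨hp, hd, hnum⟩)⟩)
      have h2 : ¬ p ∣ (u i).den := fun hd =>
        hpS (Finset.mem_biUnion.mpr ⟨i, Finset.mem_univ i,
          Finset.mem_union_right _ (Nat.mem_primeFactors.mpr ⟨hp, hd, (u i).den_nz⟩)⟩)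
      rw [padicValRat_def, padicValInt, padicValNat.eq_zero_of_not_dvd h1,
        padicValNat.eq_zero_of_not_dvd h2]
      simp
    have hcompat : ∀ p : ℕ, p.Prime → ∀ i j,
        (Nat.gcd (n i) (n j) : ℤ) ∣ padicValRat p (u i) - padicValRat p (u j) := by
      intro p hp i j
      haveI := Fact.mk hp
      rcases eq_or_ne i j with rfl | hij
      · simp
      · obtain ⟨y, hy, hey⟩ := h i j hij
        have hval : padicValRat p (u i) - padicValRat p (u j) =
            (Nat.gcd (n i) (n j) : ℤ) * padicValRat p y := by
          have := congrArg (padicValRat p) hey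
          rwa [padicValRat.mul (hu i).ne' (inv_ne_zero (hu j).ne'), padicValRat.inv,
            padicValRat.pow _, ← sub_eq_add_neg] at this
        exact Dvd.intro _ hval.symm
    have key : ∀ p : ℕ, p.Prime → ∃ e : ℤ, ∀ i, (n i : ℤ) ∣ padicValRat p (u i) + e := by
      intro p hp
      obtain ⟨e, -, he⟩ := my_crt l n hn (fun i => padicValRat p (u i)) (hcompat p hp)
        1 one_pos 0 (fun i => by simp)
      exact ⟨-e, fun i => by simpa [sub_eq_add_neg] using he i⟩
    classical
    set E : ℕ → ℤ := fun p => if hp : p.Prime then (key p hp).choose else 0 with hE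
    refine ⟨∏ p ∈ S, (p : ℚ) ^ (E p), ?_, ?_⟩
    · exact Finset.prod_pos fun p hp =>
        zpow_pos (by exact_mod_cast (hSprime p hp).pos) _
    · intro i
      have hxpos : (0:ℚ) < ∏ p ∈ S, (p : ℚ) ^ (E p) :=
        Finset.prod_pos fun p hp => zpow_pos (by exact_mod_cast (hSprime p hp).pos) _
      refine (my_pow_iff _ (mul_pos (hu i) hxpos) (n i) (hn i)).mpr ?_
      intro p hp
      haveI := Fact.mk hp
      rw [padicValRat.mul (hu i).ne' hxpos.ne', my_val_prod S hSprime E p]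
      by_cases hpS : p ∈ S
      · rw [if_pos hpS, hE]
        simp only [dif_pos hp]
        exact (key p hp).choose_spec i
      · rw [if_neg hpS, hvanish p hp hpS i]
        simp
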